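/- Suppose A ∈ ℝ^{n×n} is invertible and the system (A,C,𝒜) is unobservable. Then there exist an integer s ≥ 1 and a purely periodic admissible signal σ ∈ ℒ(𝒜) with period s (i.e., σ(t+s) = σ(t) for all t ∈ ℕ) such that the observability matrix O_σ(t) has rank strictly less than n for all t ∈ ℕ. -/

import Mathlib

open Matrix Filter

/-- An automaton `𝒜 = (M, s)` with `N` nodes: transition matrix `M ∈ {0,1}^{N×N}`
and vector of node labels `s ∈ {0,1}^N`. -/
structure Automaton (N : ℕ) where
  M : Matrix (Fin N) (Fin N) Bool
  s : Fin N → Bool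

/-- `σ ∈ ℒ(𝒜)`: the data loss signal `σ` is admissible with respect to `𝒜`. -/
def Automaton.Admissible {N : ℕ} (𝒜 : Automaton N) (σ : ℕ → Bool) : Prop :=
  ∃ v : ℕ → Fin N, ∀ t : ℕ, 𝒜.M (v t) (v (t + 1)) = true ∧ σ t = 𝒜.s (v t)

/-- A finite word of length `r` generated by `𝒜` (only the first `r` letters of `w` matter). -/
def Automaton.AdmissibleWord {N : ℕ} (𝒜 : Automaton N) (r : ℕ) (w : ℕ → Bool) : Prop :=
  ∃ v : ℕ → Fin N, (∀ t : ℕ, t + 1 < r → 𝒜.M (v t) (v (t + 1)) = true) ∧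
    ∀ t : ℕ, t < r → w t = 𝒜.s (v t)

/-- The reverse automaton `𝒜ʳ = (Mᵀ, s)`. -/
def Automaton.rev {N : ℕ} (𝒜 : Automaton N) : Automaton N :=
  ⟨𝒜.M.transpose, 𝒜.s⟩

/-- Observability of the system `(A, C, 𝒜)`. -/
def Observable {N n p : ℕ} (A : Matrix (Fin n) (Fin n) ℝ) (C : Matrix (Fin p) (Fin n) ℝ)
    (𝒜 : Automaton N) : Prop :=
  ∀ σ : ℕ → Bool, 𝒜.Admissible σ → ∀ x₀ : Fin n → ℝ,
    (∀ t : ℕ, σ t = true → (C * A ^ t).mulVec x₀ = 0) → x₀ = 0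

/-- Practical observability of the system `(A, C, 𝒜)`. -/
def PracticallyObservable {N n p : ℕ} (A : Matrix (Fin n) (Fin n) ℝ)
    (C : Matrix (Fin p) (Fin n) ℝ) (𝒜 : Automaton N) : Prop :=
  ∃ T : ℕ, ∀ σ : ℕ → Bool, 𝒜.Admissible σ → ∀ x₀ : Fin n → ℝ,
    (∀ t : ℕ, t ≤ T → σ t = true → (C * A ^ t).mulVec x₀ = 0) → x₀ = 0

/-- Constructibility of the system `(A, C, 𝒜)`. -/
def Constructible {N n p : ℕ} (A : Matrix (Fin n) (Fin n) ℝ) (C : Matrix (Fin p) (Fin n) ℝ)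
    (𝒜 : Automaton N) : Prop :=
  ∀ σ : ℕ → Bool, 𝒜.Admissible σ → ∃ T : ℕ, ∀ x₀ : Fin n → ℝ,
    (∀ t : ℕ, t ≤ T → σ t = true → (C * A ^ t).mulVec x₀ = 0) → (A ^ T).mulVec x₀ = 0

/-- Practical constructibility of the system `(A, C, 𝒜)`. -/
def PracticallyConstructible {N n p : ℕ} (A : Matrix (Fin n) (Fin n) ℝ)
    (C : Matrix (Fin p) (Fin n) ℝ) (𝒜 : Automaton N) : Prop :=
  ∃ T : ℕ, ∀ σ : ℕ → Bool, 𝒜.Admissible σ → ∀ x₀ : Fin n → ℝ,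
    (∀ t : ℕ, t ≤ T → σ t = true → (C * A ^ t).mulVec x₀ = 0) → (A ^ T).mulVec x₀ = 0

/-- Detectability of the system `(A, C, 𝒜)`. -/
def Detectable {N n p : ℕ} (A : Matrix (Fin n) (Fin n) ℝ) (C : Matrix (Fin p) (Fin n) ℝ)
    (𝒜 : Automaton N) : Prop :=
  ∀ σ : ℕ → Bool, 𝒜.Admissible σ → ∀ x₀ : Fin n → ℝ,
    (∀ t : ℕ, σ t = true → (C * A ^ t).mulVec x₀ = 0) →
      Tendsto (fun t : ℕ => (A ^ t).mulVec x₀) atTop (nhds 0)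

/-- The observability matrix `O_σ(t) = [σ(0)C; σ(1)CA; ...; σ(t−1)CA^{t−1}]`
(blocks stacked vertically, block `i` is row-block `i`). -/
def obsMat {n p : ℕ} (A : Matrix (Fin n) (Fin n) ℝ) (C : Matrix (Fin p) (Fin n) ℝ)
    (σ : ℕ → Bool) (t : ℕ) : Matrix (Fin t × Fin p) (Fin n) ℝ :=
  fun ij k => if σ (ij.1 : ℕ) then (C * A ^ (ij.1 : ℕ)) ij.2 k else 0

/-- State trajectory of the system `x(t+1) = A x(t) + σ(t) B u(t)`. -/
def traj {n m : ℕ} (A : Matrix (Fin n) (Fin n) ℝ) (B : Matrix (Fin n) (Fin m) ℝ)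
    (σ : ℕ → Bool) (u : ℕ → Fin m → ℝ) (x₀ : Fin n → ℝ) : ℕ → Fin n → ℝ
  | 0 => x₀
  | t + 1 => A.mulVec (traj A B σ u x₀ t) + if σ t then B.mulVec (u t) else 0

/-- Controllability of the system `(A, B, 𝒜)`. -/
def Controllable {N n m : ℕ} (A : Matrix (Fin n) (Fin n) ℝ) (B : Matrix (Fin n) (Fin m) ℝ)
    (𝒜 : Automaton N) : Prop :=
  ∀ σ : ℕ → Bool, 𝒜.Admissible σ → ∀ x₀ xf : Fin n → ℝ,
    ∃ u : ℕ → Fin m → ℝ, ∃ T : ℕ, traj A B σ u x₀ T = xf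

/-- Reachability of the system `(A, B, 𝒜)`. -/
def Reachable {N n m : ℕ} (A : Matrix (Fin n) (Fin n) ℝ) (B : Matrix (Fin n) (Fin m) ℝ)
    (𝒜 : Automaton N) : Prop :=
  ∀ σ : ℕ → Bool, 𝒜.Admissible σ → ∀ xf : Fin n → ℝ,
    ∃ u : ℕ → Fin m → ℝ, ∃ T : ℕ, traj A B σ u 0 T = xf

/-- 0-controllability of the system `(A, B, 𝒜)`. -/
def ZeroControllable {N n m : ℕ} (A : Matrix (Fin n) (Fin n) ℝ) (B : Matrix (Fin n) (Fin m) ℝ)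
    (𝒜 : Automaton N) : Prop :=
  ∀ σ : ℕ → Bool, 𝒜.Admissible σ → ∀ x₀ : Fin n → ℝ,
    ∃ u : ℕ → Fin m → ℝ, ∃ T : ℕ, traj A B σ u x₀ T = 0

/-- Stabilizability of the system `(A, B, 𝒜)`. -/
def Stabilizable {N n m : ℕ} (A : Matrix (Fin n) (Fin n) ℝ) (B : Matrix (Fin n) (Fin m) ℝ)
    (𝒜 : Automaton N) : Prop :=
  ∀ σ : ℕ → Bool, 𝒜.Admissible σ → ∀ x₀ : Fin n → ℝ,
    ∃ u : ℕ → Fin m → ℝ, Tendsto (fun t : ℕ => traj A B σ u x₀ t) atTop (nhds 0)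

/-- Practical controllability of the system `(A, B, 𝒜)`. -/
def PracticallyControllable {N n m : ℕ} (A : Matrix (Fin n) (Fin n) ℝ)
    (B : Matrix (Fin n) (Fin m) ℝ) (𝒜 : Automaton N) : Prop :=
  ∃ T : ℕ, ∀ σ : ℕ → Bool, 𝒜.Admissible σ → ∀ x₀ xf : Fin n → ℝ,
    ∃ u : ℕ → Fin m → ℝ, ∃ t : ℕ, t ≤ T ∧ traj A B σ u x₀ t = xf

/-- Practical reachability of the system `(A, B, 𝒜)`. -/
def PracticallyReachable {N n m : ℕ} (A : Matrix (Fin n) (Fin n) ℝ)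
    (B : Matrix (Fin n) (Fin m) ℝ) (𝒜 : Automaton N) : Prop :=
  ∃ T : ℕ, ∀ σ : ℕ → Bool, 𝒜.Admissible σ → ∀ xf : Fin n → ℝ,
    ∃ u : ℕ → Fin m → ℝ, ∃ t : ℕ, t ≤ T ∧ traj A B σ u 0 t = xf

/-- Practical 0-controllability of the system `(A, B, 𝒜)`. -/
def PracticallyZeroControllable {N n m : ℕ} (A : Matrix (Fin n) (Fin n) ℝ)
    (B : Matrix (Fin n) (Fin m) ℝ) (𝒜 : Automaton N) : Prop :=
  ∃ T : ℕ, ∀ σ : ℕ → Bool, 𝒜.Admissible σ → ∀ x₀ : Fin n → ℝ,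
    ∃ u : ℕ → Fin m → ℝ, ∃ t : ℕ, t ≤ T ∧ traj A B σ u x₀ t = 0

/-- The reachability matrix `C_σ(t) = [σ(t−1)B, σ(t−2)AB, ..., σ(0)A^{t−1}B]`
(block-column `i` is `σ(t−1−i) Aⁱ B`). -/
def reachMat {n m : ℕ} (A : Matrix (Fin n) (Fin n) ℝ) (B : Matrix (Fin n) (Fin m) ℝ)
    (σ : ℕ → Bool) (t : ℕ) : Matrix (Fin n) (Fin t × Fin m) ℝ :=
  fun k ij => if σ (t - 1 - (ij.1 : ℕ)) then (A ^ (ij.1 : ℕ) * B) k ij.2 else 0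

/-- State trajectory of the system with varying delays
`x(t+1) = A x(t) + Σ_{t' ≤ t, t' + d(t') = t} B u(t')`. -/
def delayTraj {n m : ℕ} (A : Matrix (Fin n) (Fin n) ℝ) (B : Matrix (Fin n) (Fin m) ℝ)
    (d : ℕ → ℕ) (u : ℕ → Fin m → ℝ) (x₀ : Fin n → ℝ) : ℕ → Fin n → ℝ
  | 0 => x₀
  | t + 1 => A.mulVec (delayTraj A B d u x₀ t) +
      ∑ t' ∈ Finset.range (t + 1), if t' + d t' = t then B.mulVec (u t') else 0

/-- Controllability of the system with varying delays `(A, B, 𝒟)`. -/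
def DelayControllable {n m : ℕ} (A : Matrix (Fin n) (Fin n) ℝ) (B : Matrix (Fin n) (Fin m) ℝ)
    (𝒟 : Finset ℕ) : Prop :=
  ∀ d : ℕ → ℕ, (∀ t : ℕ, d t ∈ 𝒟) → ∀ x₀ xf : Fin n → ℝ,
    ∃ u : ℕ → Fin m → ℝ, ∃ T : ℕ, delayTraj A B d u x₀ T = xf

/-- The controllability matrix `C̄_d(t)` of a system with varying delays: its `i`-th
block column (here indexed by `j = i - 1 : Fin t`) is `A^{t−i−d(i−1)} B` when
`i + d(i−1) ≤ t`, and the zero block otherwise. -/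
def delayCtrbMat {n m : ℕ} (A : Matrix (Fin n) (Fin n) ℝ) (B : Matrix (Fin n) (Fin m) ℝ)
    (d : ℕ → ℕ) (t : ℕ) : Matrix (Fin n) (Fin t × Fin m) ℝ :=
  fun k jl => if (jl.1 : ℕ) + 1 + d (jl.1 : ℕ) ≤ t
    then (A ^ (t - ((jl.1 : ℕ) + 1) - d (jl.1 : ℕ)) * B) k jl.2 else 0

-- The actuation signal `τ_d` of a delay signal `d`: `τ_d(t) = 1` iff there is
-- `t'` with `t' + d(t') = t`.
open Classical in
noncomputable def actuation (d : ℕ → ℕ) (t : ℕ) : Bool :=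
  if ∃ t' : ℕ, t' + d t' = t then true else false


set_option linter.unusedSectionVars false
set_option linter.unusedVariables false

/- ===================== Auxiliary development ===================== -/

section LexWF

/-- Lexicographic (smaller index more significant) strict order on `Fin m → ℕ`. -/
def LexLt {m : ℕ} (f g : Fin m → ℕ) : Prop :=
  ∃ i, (∀ j, j < i → f j = g j) ∧ f i < g i

lemma lexLt_wf (m : ℕ) : WellFounded (@LexLt m) := by
  induction m with
  | zero =>
    constructor; intro a; constructor; intro y hy
    obtain ⟨i, _, _⟩ := hy; exact i.elim0
  | succ m ih =>
    have wfp : WellFounded (Prod.Lex ((· < ·) : ℕ → ℕ → Prop) (@LexLt m)) :=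
      WellFounded.prod_lex wellFounded_lt ih
    have : Subrelation (@LexLt (m+1))
        (InvImage (Prod.Lex ((· < ·) : ℕ → ℕ → Prop) (@LexLt m))
          (fun f : Fin (m+1) → ℕ => (f 0, fun i : Fin m => f i.succ))) := by
      intro f g hfg
      obtain ⟨i, hj, hi⟩ := hfg
      rcases Fin.eq_zero_or_eq_succ i with rfl | ⟨i', rfl⟩
      · exact Prod.Lex.left _ _ hi
      · have h0 : f 0 = g 0 := hj 0 (Fin.succ_pos i')
        show Prod.Lex _ _ (f 0, fun i : Fin m => f i.succ) (g 0, fun i : Fin m => g i.succ)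
        rw [h0]
        exact Prod.Lex.right _ ⟨i', fun j hj' => hj j.succ (by rwa [Fin.succ_lt_succ_iff]), hi⟩
    exact Subrelation.wf this (InvImage.wf _ wfp)

end LexWF

section Subspaces

variable {V : Type*} [AddCommGroup V] [Module ℝ V]

/-- A subspace contained in a finite union of subspaces is contained in one of them. -/
lemma subspace_le_of_subset_finUnion (F : Finset (Submodule ℝ V)) (S : Submodule ℝ V)
    (h : (S : Set V) ⊆ ⋃ W ∈ F, (W : Set V)) : ∃ W ∈ F, S ≤ W := by
  classical
  induction F using Finset.induction_on with
  | empty =>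
    exfalso
    have := h S.zero_mem
    simp at this
  | insert _ _ hWF ih =>
    rename_i W F
    by_cases hc : (S : Set V) ⊆ ⋃ W' ∈ F, (W' : Set V)
    · obtain ⟨W', h1, h2⟩ := ih hc
      exact ⟨W', Finset.mem_insert_of_mem h1, h2⟩
    · obtain ⟨x, hxS, hx⟩ := Set.not_subset.mp hc
      have hxW : x ∈ W := by
        have := h hxS
        simp only [Finset.mem_insert, Set.mem_iUnion, exists_prop] at this
        obtain ⟨W', hW', hxW'⟩ := this
        rcases hW' with rfl | hW'
        · exact hxW'
        · exfalso; apply hx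
          exact Set.mem_biUnion hW' hxW'
      by_cases hSW : S ≤ W
      · exact ⟨W, Finset.mem_insert_self _ _, hSW⟩
      · exfalso
        obtain ⟨y, hyS, hyW⟩ := SetLike.not_le_iff_exists.mp hSW
        have hmem : ∀ c : ℝ, ∃ W' : {W' // W' ∈ F}, y + c • x ∈ (W' : Submodule ℝ V) := by
          intro c
          have hy' : y + c • x ∈ S := S.add_mem hyS (S.smul_mem c hxS)
          have := h hy'
          simp only [Finset.mem_insert, Set.mem_iUnion, exists_prop] at this
          obtain ⟨W', hW', hxW'⟩ := this
          rcases hW' with rfl | hW'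
          · exfalso; apply hyW
            have : y + c • x - c • x ∈ W' := W'.sub_mem hxW' (W'.smul_mem c hxW)
            simpa using this
          · exact ⟨⟨W', hW'⟩, hxW'⟩
        choose f hf using hmem
        obtain ⟨c₁, c₂, hne, heqf⟩ := Finite.exists_ne_map_eq_of_infinite f
        set W' := (f c₁ : Submodule ℝ V) with hW'
        have h1 : y + c₁ • x ∈ W' := hf c₁
        have h2 : y + c₂ • x ∈ W' := by rw [hW', heqf]; exact hf c₂
        have h3 : (c₁ - c₂) • x ∈ W' := by
          have := W'.sub_mem h1 h2
          simpa [sub_smul] using this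
        have hx' : x ∈ W' := by
          have := W'.smul_mem (c₁ - c₂)⁻¹ h3
          rwa [smul_smul, inv_mul_cancel₀ (sub_ne_zero.mpr hne), one_smul] at this
        exact hx (Set.mem_biUnion (f c₁).2 hx')

/-- Maximal subspaces contained in a set `U`. -/
def comps (U : Set V) : Set (Submodule ℝ V) :=
  {S | (S : Set V) ⊆ U ∧ ∀ T : Submodule ℝ V, (T : Set V) ⊆ U → S ≤ T → S = T}

variable [FiniteDimensional ℝ V]

lemma exists_comp_ge {U : Set V} {S : Submodule ℝ V} (hS : (S : Set V) ⊆ U) :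
    ∃ T ∈ comps U, S ≤ T := by
  suffices h : ∀ m (S : Submodule ℝ V), (S : Set V) ⊆ U →
      Module.finrank ℝ V ≤ Module.finrank ℝ S + m → ∃ T ∈ comps U, S ≤ T by
    exact h (Module.finrank ℝ V) S hS (by have := S.finrank_le; omega)
  intro m
  induction m with
  | zero =>
    intro S hS hle
    refine ⟨S, ⟨hS, ?_⟩, le_rfl⟩
    intro T hT hST
    by_contra hne
    have h1 : S < T := lt_of_le_of_ne hST hne
    have h2 := Submodule.finrank_lt_finrank_of_lt h1
    have h3 := T.finrank_le
    omega
  | succ m ih =>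
    intro S hS hle
    by_cases hmax : ∀ T : Submodule ℝ V, (T : Set V) ⊆ U → S ≤ T → S = T
    · exact ⟨S, ⟨hS, hmax⟩, le_rfl⟩
    · push_neg at hmax
      obtain ⟨T, hTU, hST, hne⟩ := hmax
      have h1 := Submodule.finrank_lt_finrank_of_lt (lt_of_le_of_ne hST hne)
      obtain ⟨T', hT', hle'⟩ := ih T hTU (by omega)
      exact ⟨T', hT', hST.trans hle'⟩

lemma comps_subset_family {U : Set V} {F : Finset (Submodule ℝ V)}
    (hU : U = ⋃ W ∈ F, (W : Set V)) : comps U ⊆ ↑F := by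
  intro S hS
  obtain ⟨W, hWF, hle⟩ := subspace_le_of_subset_finUnion F S (by rw [← hU]; exact hS.1)
  have hWU : (W : Set V) ⊆ U := by
    rw [hU]; intro x hx; exact Set.mem_biUnion hWF hx
  have := hS.2 W hWU hle
  rw [this]; exact hWF

lemma comps_finite {U : Set V} {F : Finset (Submodule ℝ V)}
    (hU : U = ⋃ W ∈ F, (W : Set V)) : (comps U).Finite :=
  Set.Finite.subset F.finite_toSet (comps_subset_family hU)

lemma eq_iUnion_comps {U : Set V} {F : Finset (Submodule ℝ V)}
    (hU : U = ⋃ W ∈ F, (W : Set V)) : U = ⋃ S ∈ comps U, (S : Set V) := by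
  apply Set.Subset.antisymm
  · intro x hx
    rw [hU] at hx
    simp only [Set.mem_iUnion, exists_prop] at hx
    obtain ⟨W, hWF, hxW⟩ := hx
    have hWU : (W : Set V) ⊆ U := by
      rw [hU]; intro z hz; exact Set.mem_biUnion hWF hz
    obtain ⟨T, hTc, hle⟩ := exists_comp_ge hWU
    exact Set.mem_biUnion hTc (hle hxW)
  · intro x hx
    simp only [Set.mem_iUnion, exists_prop] at hx
    obtain ⟨S, hSc, hxS⟩ := hx
    exact hSc.1 hxS

/-- Number of maximal subspaces of `U` of a given dimension. -/
noncomputable def mu (U : Set V) (d : ℕ) : ℕ :=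
  {S ∈ comps U | Module.finrank ℝ S = d}.ncard

lemma mu_descent {U U' : Set V} (F F' : Finset (Submodule ℝ V))
    (hU : U = ⋃ W ∈ F, (W : Set V)) (hU' : U' = ⋃ W ∈ F', (W : Set V))
    (hsub : U' ⊆ U) (hne : U' ≠ U) :
    ∃ d, d ≤ Module.finrank ℝ V ∧ (∀ e, d < e → mu U' e = mu U e) ∧ mu U' d < mu U d := by
  classical
  have hcU := eq_iUnion_comps hU
  have hfinU := comps_finite hU
  set NS : Set (Submodule ℝ V) := {S | S ∈ comps U ∧ ¬ (S : Set V) ⊆ U'} with hNSdef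
  have hNSfin : NS.Finite := hfinU.subset (fun S hS => hS.1)
  have hNSne : NS.Nonempty := by
    by_contra h
    rw [Set.not_nonempty_iff_eq_empty] at h
    apply hne
    apply Set.Subset.antisymm hsub
    intro x hx
    rw [hcU] at hx
    simp only [Set.mem_iUnion, exists_prop] at hx
    obtain ⟨S, hSc, hxS⟩ := hx
    have hsub' : (S : Set V) ⊆ U' := by
      by_contra hns
      have : S ∈ NS := ⟨hSc, hns⟩
      rw [h] at this
      exact this
    exact hsub' hxS
  obtain ⟨Sm, hSmNS, hSmmax⟩ :=
    Set.Finite.exists_maximalFor (fun S : Submodule ℝ V => Module.finrank ℝ S) NS hNSfin hNSne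
  set d := Module.finrank ℝ Sm with hd
  have hdmax : ∀ S ∈ NS, Module.finrank ℝ S ≤ d := by
    intro S hS
    rcases le_or_gt (Module.finrank ℝ S) d with h | h
    · exact h
    · have := hSmmax hS (le_of_lt h); omega
  have hsurv : ∀ S, S ∈ comps U → (S : Set V) ⊆ U' → S ∈ comps U' :=
    fun S hS h' => ⟨h', fun T hT hle => hS.2 T (hT.trans hsub) hle⟩
  have hlift : ∀ S', S' ∈ comps U' → d ≤ Module.finrank ℝ S' → S' ∈ comps U := by
    intro S' hS' hd'
    obtain ⟨S, hSc, hle⟩ := exists_comp_ge (hS'.1.trans hsub)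
    by_cases hsubS : (S : Set V) ⊆ U'
    · have : S' = S := hS'.2 S hsubS hle
      rwa [this]
    · have hSNS : S ∈ NS := ⟨hSc, hsubS⟩
      have h1 : Module.finrank ℝ S ≤ d := hdmax S hSNS
      have : S' = S := Submodule.eq_of_le_of_finrank_le hle (le_trans h1 hd')
      exfalso; apply hsubS; rw [← this]; exact hS'.1
  have hconv : ∀ S, S ∈ comps U → d < Module.finrank ℝ S → S ∈ comps U' := by
    intro S hS hd'
    have hsub' : (S : Set V) ⊆ U' := by
      by_contra h
      have : S ∈ NS := ⟨hS, h⟩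
      have := hdmax S this; omega
    exact hsurv S hS hsub'
  refine ⟨d, ?_, ?_, ?_⟩
  · rw [hd]; exact Sm.finrank_le
  · intro e he
    have hsets : {S ∈ comps U' | Module.finrank ℝ S = e} = {S ∈ comps U | Module.finrank ℝ S = e} := by
      ext S
      constructor
      · rintro ⟨h1, h2⟩; exact ⟨hlift S h1 (by omega), h2⟩
      · rintro ⟨h1, h2⟩; exact ⟨hconv S h1 (by omega), h2⟩
    rw [mu, mu, hsets]
  · apply Set.ncard_lt_ncard
    · rw [Set.ssubset_iff_subset_ne]
      constructor
      · rintro S ⟨h1, h2⟩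
        exact ⟨hlift S h1 (le_of_eq h2.symm), h2⟩
      · intro hcontra
        have hSm1 : Sm ∈ {S ∈ comps U | Module.finrank ℝ S = d} := ⟨hSmNS.1, rfl⟩
        rw [← hcontra] at hSm1
        exact hSmNS.2 hSm1.1.1
    · exact hfinU.subset (fun S hS => hS.1)

lemma chain_stab (U : ℕ → Set V) (hmono : ∀ k, U (k+1) ⊆ U k)
    (hfu : ∀ k, ∃ F : Finset (Submodule ℝ V), U k = ⋃ W ∈ F, (W : Set V)) :
    ∃ T, ∀ k, T ≤ k → U k = U T := by
  have hmono' : ∀ j k, j ≤ k → U k ⊆ U j := by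
    intro j k h
    induction k with
    | zero =>
      have hj0 : j = 0 := Nat.le_zero.mp h
      subst hj0; exact subset_rfl
    | succ k ih =>
      rcases Nat.lt_or_ge j (k+1) with h' | h'
      · exact (hmono k).trans (ih (by omega))
      · have hjk : j = k+1 := by omega
        subst hjk; exact subset_rfl
  set D := Module.finrank ℝ V with hD
  set ℓ : ℕ → (Fin (D+1) → ℕ) := fun k i => mu (U k) (D - (i : ℕ)) with hℓ
  obtain ⟨x, hxmem, hmin⟩ := (lexLt_wf (D+1)).has_min (Set.range ℓ) ⟨ℓ 0, 0, rfl⟩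
  obtain ⟨k₀, rfl⟩ := hxmem
  refine ⟨k₀, fun k hk => ?_⟩
  by_contra hne
  obtain ⟨F, hF⟩ := hfu k
  obtain ⟨F₀, hF₀⟩ := hfu k₀
  obtain ⟨d, hdD, heqd, hltd⟩ := mu_descent F₀ F hF₀ hF (hmono' _ _ hk) hne
  apply hmin (ℓ k) ⟨k, rfl⟩
  refine ⟨⟨D - d, by omega⟩, fun j hj => ?_, ?_⟩
  · have hj' : (j : ℕ) < D - d := hj
    have hgt : d < D - (j : ℕ) := by omega
    exact heqd _ hgt
  · show mu (U k) (D - (D - d)) < mu (U k₀) (D - (D - d))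
    rw [Nat.sub_sub_self hdD]
    exact hltd

end Subspaces

section YsDev

variable {N n p : ℕ} (A : Matrix (Fin n) (Fin n) ℝ) (C : Matrix (Fin p) (Fin n) ℝ)
  (𝒜 : Automaton N)

/-- States `x` compatible (unobserved) with some length-`k` path of `𝒜` starting at `q`. -/
def Ys (q : Fin N) (k : ℕ) : Set (Fin n → ℝ) :=
  {x | ∃ v : ℕ → Fin N, v 0 = q ∧ (∀ j, j + 1 < k → 𝒜.M (v j) (v (j+1)) = true) ∧
    ∀ j, j < k → 𝒜.s (v j) = true → (C * A ^ j).mulVec x = 0}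

lemma Ys_antitone (q : Fin N) {j k : ℕ} (h : j ≤ k) : Ys A C 𝒜 q k ⊆ Ys A C 𝒜 q j := by
  rintro x ⟨v, h0, hp, hl⟩
  exact ⟨v, h0, fun i hi => hp i (lt_of_lt_of_le hi h), fun i hi => hl i (lt_of_lt_of_le hi h)⟩

lemma Ys_fu (q : Fin N) (k : ℕ) :
    ∃ F : Finset (Submodule ℝ (Fin n → ℝ)), Ys A C 𝒜 q k = ⋃ W ∈ F, (W : Set (Fin n → ℝ)) := by
  classical
  set ext : (Fin k → Fin N) → ℕ → Fin N := fun f j => if h : j < k then f ⟨j, h⟩ else q with hext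
  set Vsub : (ℕ → Fin N) → Submodule ℝ (Fin n → ℝ) := fun v =>
    ⨅ (j : ℕ) (_ : j < k ∧ 𝒜.s (v j) = true), LinearMap.ker (C * A ^ j).mulVecLin with hVsub
  set P : (Fin k → Fin N) → Prop := fun f =>
    (∀ h : 0 < k, f ⟨0, h⟩ = q) ∧
      ∀ j, ∀ hj : j + 1 < k, 𝒜.M (f ⟨j, by omega⟩) (f ⟨j+1, hj⟩) = true with hP
  refine ⟨(Finset.univ.filter P).image (fun f => Vsub (ext f)), ?_⟩
  ext x
  simp only [Set.mem_iUnion, Finset.mem_image, Finset.mem_filter, Finset.mem_univ, true_and,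
    exists_prop]
  constructor
  · rintro ⟨v, h0, hp, hl⟩
    refine ⟨Vsub (ext (fun i : Fin k => v i)), ⟨fun i : Fin k => v i, ⟨?_, ?_⟩, rfl⟩, ?_⟩
    · intro h; exact h0
    · intro j hj; exact hp j hj
    · rw [SetLike.mem_coe, hVsub]
      refine (Submodule.mem_iInf _).mpr fun j => (Submodule.mem_iInf _).mpr fun hc => ?_
      rw [LinearMap.mem_ker, Matrix.mulVecLin_apply]
      have hjk : j < k := hc.1
      have : ext (fun i : Fin k => v i) j = v j := by
        rw [hext]; simp [hjk]
      exact hl j hjk (by rw [← this]; exact hc.2)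
  · rintro ⟨W, ⟨f, hPf, rfl⟩, hx⟩
    refine ⟨ext f, ?_, ?_, ?_⟩
    · by_cases h : 0 < k
      · rw [hext]; simp only [h, dif_pos]; exact hPf.1 h
      · rw [hext]; simp [h]
    · intro j hj
      have h1 : j < k := by omega
      have e1 : ext f j = f ⟨j, h1⟩ := by rw [hext]; simp [h1]
      have e2 : ext f (j+1) = f ⟨j+1, hj⟩ := by rw [hext]; simp [hj]
      rw [e1, e2]; exact hPf.2 j hj
    · intro j hj hs
      rw [SetLike.mem_coe, hVsub] at hx
      have := (Submodule.mem_iInf _).mp ((Submodule.mem_iInf _).mp hx j) ⟨hj, hs⟩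
      rwa [LinearMap.mem_ker, Matrix.mulVecLin_apply] at this

lemma Ys_label (q : Fin N) (k : ℕ) (hk : 1 ≤ k) {x : Fin n → ℝ}
    (hx : x ∈ Ys A C 𝒜 q k) (hq : 𝒜.s q = true) : C.mulVec x = 0 := by
  obtain ⟨v, h0, _, hl⟩ := hx
  have := hl 0 hk (by rw [h0]; exact hq)
  simpa [pow_zero, mul_one] using this

lemma Ys_step (q : Fin N) (k : ℕ) {x : Fin n → ℝ} (hx : x ∈ Ys A C 𝒜 q (k+2)) :
    ∃ q', 𝒜.M q q' = true ∧ A.mulVec x ∈ Ys A C 𝒜 q' (k+1) := by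
  obtain ⟨v, h0, hp, hl⟩ := hx
  refine ⟨v 1, by rw [← h0]; exact hp 0 (by omega),
    ⟨fun j => v (j+1), rfl, fun j hj => hp (j+1) (by omega), fun j hj hs => ?_⟩⟩
  have h2 := hl (j+1) (by omega) hs
  rw [pow_succ, ← Matrix.mul_assoc] at h2
  rw [Matrix.mulVec_mulVec]
  exact h2

end YsDev

/-- If `A` is invertible and `(A,C,𝒜)` is unobservable, then there is a purely periodic
admissible signal `σ ∈ ℒ(𝒜)` of some period `s ≥ 1` whose observability matrices are
rank-deficient for all times. -/
theorem unobservable_periodic_signal {N n p : ℕ} (A : Matrix (Fin n) (Fin n) ℝ)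
    (C : Matrix (Fin p) (Fin n) ℝ) (𝒜 : Automaton N) (hA : IsUnit A.det)
    (hobs : ¬ Observable A C 𝒜) :
    ∃ s : ℕ, 1 ≤ s ∧ ∃ σ : ℕ → Bool, 𝒜.Admissible σ ∧ (∀ t : ℕ, σ (t + s) = σ t) ∧
      ∀ t : ℕ, (obsMat A C σ t).rank < n := by
  classical
  rw [Observable] at hobs
  push_neg at hobs
  obtain ⟨σ, hadm, x₀, hx₀cond, hx₀ne⟩ := hobs
  obtain ⟨v, hv⟩ := hadm
  have hn : 0 < n := by
    by_contra h
    push_neg at h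
    apply hx₀ne
    have hn0 : n = 0 := by omega
    subst hn0
    exact Subsingleton.elim _ _
  -- stabilize the chains k ↦ Ys q k
  choose T hT using fun q : Fin N =>
    chain_stab (fun k => Ys A C 𝒜 q k) (fun k => Ys_antitone A C 𝒜 q (Nat.le_succ k))
      (fun k => Ys_fu A C 𝒜 q k)
  set K : ℕ := (Finset.univ.sup T) + 1 with hK
  have hstab : ∀ (q : Fin N) (k : ℕ), K ≤ k → Ys A C 𝒜 q k = Ys A C 𝒜 q K := by
    intro q k hk
    have h1 : T q ≤ K := le_trans (Finset.le_sup (Finset.mem_univ q)) (Nat.le_succ _)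
    rw [hT q k (h1.trans hk), hT q K h1]
  set Y : Fin N → Set (Fin n → ℝ) := fun q => Ys A C 𝒜 q K with hYdef
  choose Fam hFam using fun q : Fin N => Ys_fu A C 𝒜 q K
  have hK1 : 1 ≤ K := by omega
  have hYlabel : ∀ q x, x ∈ Y q → 𝒜.s q = true → C.mulVec x = 0 :=
    fun q x hx hq => Ys_label A C 𝒜 q K hK1 hx hq
  have hYstep : ∀ q x, x ∈ Y q → ∃ q', 𝒜.M q q' = true ∧ A.mulVec x ∈ Y q' := by
    intro q x hx
    have hx' : x ∈ Ys A C 𝒜 q (K+2) := by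
      rw [hstab q (K+2) (by omega)]; exact hx
    obtain ⟨q', he, hm⟩ := Ys_step A C 𝒜 q K hx'
    refine ⟨q', he, ?_⟩
    show A.mulVec x ∈ Ys A C 𝒜 q' K
    rw [← hstab q' (K+1) (by omega)]
    exact hm
  have hx₀Y : x₀ ∈ Y (v 0) :=
    ⟨v, rfl, fun j _ => (hv j).1, fun j _ hs => hx₀cond j (by rw [(hv j).2]; exact hs)⟩
  have hmemY : ∀ (q : Fin N) (W : Submodule ℝ (Fin n → ℝ)), W ∈ Fam q →
      (W : Set (Fin n → ℝ)) ⊆ Y q := by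
    intro q W hW x hx
    show x ∈ Ys A C 𝒜 q K
    rw [hFam q]
    exact Set.mem_biUnion hW hx
  -- the finite state space
  set 𝒮 : Set (Fin N × Submodule ℝ (Fin n → ℝ)) := {pr | pr.2 ∈ Fam pr.1} with h𝒮def
  have h𝒮fin : 𝒮.Finite := by
    apply Set.Finite.subset
      (Set.finite_iUnion (fun q : Fin N =>
        Set.Finite.prod (Set.finite_singleton q) (Fam q).finite_toSet))
    intro pr hpr
    exact Set.mem_iUnion.2 ⟨pr.1, ⟨rfl, hpr⟩⟩
  haveI : Finite ↥𝒮 := h𝒮fin.to_subtype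
  -- one-step successor on states
  have hstep𝒮 : ∀ st : ↥𝒮, ∃ st' : ↥𝒮, 𝒜.M st.val.1 st'.val.1 = true ∧
      Submodule.map A.mulVecLin st.val.2 ≤ st'.val.2 := by
    rintro ⟨⟨q, S⟩, hS⟩
    set G : Finset (Submodule ℝ (Fin n → ℝ)) :=
      (Finset.univ.filter (fun q' => 𝒜.M q q' = true)).biUnion Fam with hG
    have hsub : ((Submodule.map A.mulVecLin S : Submodule ℝ (Fin n → ℝ)) : Set (Fin n → ℝ)) ⊆
        ⋃ W ∈ G, (W : Set (Fin n → ℝ)) := by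
      rintro y hy
      rw [SetLike.mem_coe, Submodule.mem_map] at hy
      obtain ⟨x, hxS, rfl⟩ := hy
      have hxY : x ∈ Y q := hmemY q S hS hxS
      obtain ⟨q', he, hm⟩ := hYstep q x hxY
      have hm' : A.mulVec x ∈ Ys A C 𝒜 q' K := hm
      rw [hFam q'] at hm'
      simp only [Set.mem_iUnion, exists_prop] at hm'
      obtain ⟨W, hW, hmW⟩ := hm'
      have hWG : W ∈ G := Finset.mem_biUnion.2
        ⟨q', Finset.mem_filter.2 ⟨Finset.mem_univ q', he⟩, hW⟩
      rw [Matrix.mulVecLin_apply]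
      exact Set.mem_biUnion hWG hmW
    obtain ⟨W, hWG, hle⟩ := subspace_le_of_subset_finUnion G _ hsub
    obtain ⟨q', hq'succ, hWFam⟩ := Finset.mem_biUnion.1 hWG
    exact ⟨⟨(q', W), hWFam⟩, (Finset.mem_filter.1 hq'succ).2, hle⟩
  choose nxt hnxt1 hnxt2 using hstep𝒮
  -- initial state
  have hx₀Y' : x₀ ∈ Ys A C 𝒜 (v 0) K := hx₀Y
  rw [hFam (v 0)] at hx₀Y'
  simp only [Set.mem_iUnion, exists_prop] at hx₀Y'
  obtain ⟨S₀, hS₀Fam, hx₀S₀⟩ := hx₀Y'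
  set g : ℕ → ↥𝒮 := fun t => nxt^[t] ⟨(v 0, S₀), hS₀Fam⟩ with hg
  have hgsucc : ∀ t, g (t+1) = nxt (g t) := fun t => Function.iterate_succ_apply' nxt t _
  have hedge : ∀ t, 𝒜.M ((g t).val).1 ((g (t+1)).val).1 = true := by
    intro t; rw [hgsucc]; exact hnxt1 (g t)
  have hmap : ∀ t x, x ∈ ((g t).val).2 → A.mulVec x ∈ ((g (t+1)).val).2 := by
    intro t x hx
    rw [hgsucc]
    apply hnxt2 (g t)
    rw [← Matrix.mulVecLin_apply]
    exact Submodule.mem_map_of_mem hx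
  have hpow : ∀ b a x, x ∈ ((g a).val).2 → (A ^ b).mulVec x ∈ ((g (a+b)).val).2 := by
    intro b
    induction b with
    | zero =>
      intro a x hx
      simpa [pow_zero, Matrix.one_mulVec] using hx
    | succ b ih =>
      intro a x hx
      have h1 := hmap (a+b) _ (ih a x hx)
      rw [Matrix.mulVec_mulVec, ← pow_succ'] at h1
      have he : a + b + 1 = a + (b+1) := by omega
      rwa [he] at h1
  have hx₀t : ∀ t, (A ^ t).mulVec x₀ ∈ ((g t).val).2 := by
    intro t
    have := hpow t 0 x₀ hx₀S₀
    simpa using this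
  have hApow_inj : ∀ (t : ℕ) (x : Fin n → ℝ), (A ^ t).mulVec x = 0 → x = 0 := by
    intro t x hx
    have hdet : IsUnit ((A ^ t)).det := by rw [Matrix.det_pow]; exact hA.pow t
    have h1 := congrArg (fun y => (A ^ t)⁻¹.mulVec y) hx
    simpa [Matrix.mulVec_mulVec, Matrix.nonsing_inv_mul _ hdet, Matrix.one_mulVec,
      Matrix.mulVec_zero] using h1
  -- pigeonhole
  obtain ⟨a, b, hab, heqg⟩ := Finite.exists_ne_map_eq_of_infinite g
  suffices key : ∀ a b : ℕ, a < b → g a = g b →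
      ∃ s : ℕ, 1 ≤ s ∧ ∃ σ' : ℕ → Bool, 𝒜.Admissible σ' ∧ (∀ t, σ' (t + s) = σ' t) ∧
        ∀ t, (obsMat A C σ' t).rank < n by
    rcases hab.lt_or_gt with h | h
    · exact key a b h heqg
    · exact key b a h heqg.symm
  clear hab heqg a b
  intro a b hab heqg
  set s := b - a with hs
  have hs1 : 1 ≤ s := by omega
  have hab' : a + s = b := by omega
  set q : ℕ → Fin N := fun t => ((g t).val).1 with hq
  set σ' : ℕ → Bool := fun t => 𝒜.s (q (a + t % s)) with hσ'
  have hmod : ∀ t : ℕ, t % s < s := fun t => Nat.mod_lt t (by omega)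
  have hv'edge : ∀ t, 𝒜.M (q (a + t % s)) (q (a + (t+1) % s)) = true := by
    intro t
    rcases Nat.lt_or_ge (t % s + 1) s with h | h
    · have h2 : (t+1) % s = t % s + 1 := by
        have hs2 : 2 ≤ s := by have := hmod t; omega
        rw [Nat.add_mod]
        have h1s : 1 % s = 1 := Nat.mod_eq_of_lt (by omega)
        rw [h1s]
        exact Nat.mod_eq_of_lt h
      rw [h2]
      have he : a + (t % s + 1) = (a + t % s) + 1 := by omega
      rw [he]
      exact hedge (a + t % s)
    · have h2 : t % s + 1 = s := by have := hmod t; omega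
      have h3 : (t+1) % s = 0 := by
        rcases Nat.eq_or_lt_of_le hs1 with h4 | h4
        · rw [← h4]; exact Nat.mod_one _
        · rw [Nat.add_mod]
          have h1s : 1 % s = 1 := Nat.mod_eq_of_lt (by omega)
          rw [h1s, h2]
          exact Nat.mod_self s
      rw [h3]
      have hqa : q (a + 0) = q ((a + t % s) + 1) := by
        have he1 : (a + t % s) + 1 = a + s := by omega
        rw [Nat.add_zero, he1, hab', hq]
        show ((g a).val).1 = ((g b).val).1
        rw [heqg]
      rw [hqa]
      exact hedge (a + t % s)
  have hadm' : 𝒜.Admissible σ' := ⟨fun t => q (a + t % s), fun t => ⟨hv'edge t, rfl⟩⟩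
  have hper : ∀ t, σ' (t + s) = σ' t := by
    intro t
    rw [hσ']
    simp only [Nat.add_mod_right]
  -- the common kernel vector
  set x' : Fin n → ℝ := (A ^ a).mulVec x₀ with hx'
  have hx'S : x' ∈ ((g a).val).2 := hx₀t a
  have hx'ne : x' ≠ 0 := fun h => hx₀ne (hApow_inj a x₀ h)
  have hinv : ∀ x, x ∈ ((g a).val).2 → (A ^ s).mulVec x ∈ ((g a).val).2 := by
    intro x hx
    have h1 := hpow s a x hx
    rw [hab', ← heqg] at h1
    exact h1
  have hks : ∀ k x, x ∈ ((g a).val).2 →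
      (A ^ (k * s)).mulVec x ∈ ((g a).val).2 := by
    intro k
    induction k with
    | zero =>
      intro x hx
      simpa [pow_zero, Matrix.one_mulVec] using hx
    | succ k ih =>
      intro x hx
      have h1 := hinv _ (ih x hx)
      rw [Matrix.mulVec_mulVec, ← pow_add] at h1
      have he : s + k * s = (k+1) * s := by ring
      rwa [he] at h1
  have hkill : ∀ τ, σ' τ = true → (C * A ^ τ).mulVec x' = 0 := by
    intro τ hτ
    have hdecomp : τ % s + τ / s * s = τ := Nat.mod_add_div' τ s
    have h1 : (A ^ (τ / s * s)).mulVec x' ∈ ((g a).val).2 := hks (τ / s) x' hx'S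
    have h2 := hpow (τ % s) a _ h1
    rw [Matrix.mulVec_mulVec, ← pow_add, hdecomp] at h2
    have hfam : ((g (a + τ % s)).val).2 ∈ Fam (q (a + τ % s)) := (g (a + τ % s)).2
    have hYx : (A ^ τ).mulVec x' ∈ Y (q (a + τ % s)) := hmemY _ _ hfam h2
    have hlab : 𝒜.s (q (a + τ % s)) = true := by rw [hσ'] at hτ; exact hτ
    have h3 := hYlabel _ _ hYx hlab
    rw [← Matrix.mulVec_mulVec]
    exact h3
  refine ⟨s, hs1, σ', hadm', hper, ?_⟩
  intro t
  have hker : (obsMat A C σ' t).mulVec x' = 0 := by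
    funext ij
    obtain ⟨i, j⟩ := ij
    by_cases hσi : σ' (i : ℕ) = true
    · have hk := hkill (i : ℕ) hσi
      have : (obsMat A C σ' t).mulVec x' (i, j) = ((C * A ^ (i : ℕ)).mulVec x') j := by
        simp [Matrix.mulVec, dotProduct, obsMat, hσi]
      rw [this, hk]
      rfl
    · have : (obsMat A C σ' t).mulVec x' (i, j) = 0 := by
        simp [Matrix.mulVec, dotProduct, obsMat, hσi]
      rw [this]
      rfl
  have hrank := LinearMap.finrank_range_add_finrank_ker (obsMat A C σ' t).mulVecLin
  have hdom : Module.finrank ℝ (Fin n → ℝ) = n := Module.finrank_fin_fun ℝ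
  have hkermem : x' ∈ LinearMap.ker (obsMat A C σ' t).mulVecLin := by
    rw [LinearMap.mem_ker, Matrix.mulVecLin_apply]
    exact hker
  have hkerpos : 0 < Module.finrank ℝ (LinearMap.ker (obsMat A C σ' t).mulVecLin) := by
    rw [Module.finrank_pos_iff]
    exact ⟨⟨⟨x', hkermem⟩, 0, fun hcon => hx'ne (congrArg Subtype.val hcon)⟩⟩
  have hrankdef : (obsMat A C σ' t).rank =
      Module.finrank ℝ (LinearMap.range (obsMat A C σ' t).mulVecLin) := rfl
  rw [hdom] at hrank
  omega
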